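/- If unit vectors v_1,...,v_m in R^n and positive weights a_1,...,a_m satisfy I_n = Σ a_j v_j ⊗ v_j and Σ a_j v_j = 0, then the convex hull of {v_1,...,v_m} contains the ball (1/n)·B_2^n. -/

import Mathlib

open RealInnerProductSpace Finset

theorem john_ball_in_hull (n m : ℕ) (hn : 0 < n)
    (v : Fin m → EuclideanSpace ℝ (Fin n)) (a : Fin m → ℝ)
    (hv : ∀ j, ‖v j‖ = 1) (ha : ∀ j, 0 < a j)
    (hI : ∀ x : EuclideanSpace ℝ (Fin n), ∑ j, a j • ⟪v j, x⟫ • v j = x)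
    (hbar : ∑ j, a j • v j = 0) :
    Metric.closedBall (0 : EuclideanSpace ℝ (Fin n)) (1 / n) ⊆
      convexHull ℝ (Set.range v) := by
  classical
  have hvv : ∀ j, ⟪v j, v j⟫ = 1 := by
    intro j
    rw [real_inner_self_eq_norm_sq, hv j]; norm_num
  set b := EuclideanSpace.basisFun (Fin n) ℝ with hb
  have hbnorm : ∀ i, ⟪b i, b i⟫ = (1 : ℝ) := by
    intro i
    rw [real_inner_self_eq_norm_sq, b.orthonormal.1 i]; norm_num
  -- trace: ∑ a j = n
  have hsum : ∑ j, a j = (n : ℝ) := by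
    have h1 : ∀ i : Fin n, ∑ j, a j * (⟪v j, b i⟫ * ⟪b i, v j⟫) = 1 := by
      intro i
      have h := congrArg (fun y => ⟪b i, y⟫) (hI (b i))
      simp only [inner_sum, real_inner_smul_right] at h
      rw [hbnorm i] at h
      exact h
    calc ∑ j, a j = ∑ j, a j * ⟪v j, v j⟫ := by
          simp [hvv, hv]
      _ = ∑ j, a j * ∑ i, ⟪v j, b i⟫ * ⟪b i, v j⟫ := by
          refine Finset.sum_congr rfl fun j _ => ?_
          rw [b.sum_inner_mul_inner]
      _ = ∑ i : Fin n, ∑ j, a j * (⟪v j, b i⟫ * ⟪b i, v j⟫) := by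
          rw [Finset.sum_comm]
          refine Finset.sum_congr rfl fun j _ => ?_
          rw [Finset.mul_sum]
      _ = ∑ _i : Fin n, (1 : ℝ) := Finset.sum_congr rfl fun i _ => h1 i
      _ = (n : ℝ) := by simp
  have hnpos : (0 : ℝ) < n := by exact_mod_cast hn
  -- 0 ∈ K
  have h0K : (0 : EuclideanSpace ℝ (Fin n)) ∈ convexHull ℝ (Set.range v) := by
    have hc := Finset.centerMass_mem_convexHull (Finset.univ : Finset (Fin m))
      (w := a) (z := v) (fun i _ => (ha i).le) (by rw [hsum]; exact hnpos)
      (fun i _ => Set.mem_range_self i)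
    rwa [Finset.centerMass, hbar, smul_zero] at hc
  intro x hx
  by_contra hxK
  have hKconv : Convex ℝ (convexHull ℝ (Set.range v)) := convex_convexHull ℝ _
  have hKcl : IsClosed (convexHull ℝ (Set.range v)) :=
    ((Set.finite_range v).isCompact_convexHull ℝ).isClosed
  obtain ⟨f, c, hfK, hfx⟩ := geometric_hahn_banach_closed_point hKconv hKcl hxK
  set u : EuclideanSpace ℝ (Fin n) :=
    (InnerProductSpace.toDual ℝ (EuclideanSpace ℝ (Fin n))).symm f with hu
  have hinner : ∀ y : EuclideanSpace ℝ (Fin n), ⟪u, y⟫ = f y := fun y =>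
    InnerProductSpace.toDual_symm_apply
  have hcpos : 0 < c := by
    have := hfK 0 h0K
    rwa [map_zero] at this
  have hbj : ∀ j, ⟪u, v j⟫ < c := fun j => by
    rw [hinner]; exact hfK (v j) (subset_convexHull ℝ _ (Set.mem_range_self j))
  have habs : ∀ j, |⟪u, v j⟫| ≤ ‖u‖ := fun j => by
    have := abs_real_inner_le_norm u (v j)
    rwa [hv j, mul_one] at this
  have hzero : ∑ j, a j * ⟪u, v j⟫ = 0 := by
    have h := congrArg (fun y => ⟪u, y⟫) hbar
    simp only [inner_sum, real_inner_smul_right, inner_zero_right] at h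
    exact h
  have hquad : ∑ j, a j * (⟪u, v j⟫ * ⟪u, v j⟫) = ‖u‖ ^ 2 := by
    have h := congrArg (fun y => ⟪u, y⟫) (hI u)
    simp only [inner_sum, real_inner_smul_right] at h
    rw [real_inner_self_eq_norm_sq] at h
    rw [← h]
    refine Finset.sum_congr rfl fun j _ => ?_
    rw [real_inner_comm (v j) u]
  have hkey : ‖u‖ ^ 2 ≤ ‖u‖ * (c * n) := by
    have step : ∀ j, a j * (⟪u, v j⟫ * ⟪u, v j⟫)
        ≤ ‖u‖ * (a j * (c - ⟪u, v j⟫)) + c * (a j * ⟪u, v j⟫) := by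
      intro j
      have h2 : (-⟪u, v j⟫) * (c - ⟪u, v j⟫) ≤ ‖u‖ * (c - ⟪u, v j⟫) := by
        apply mul_le_mul_of_nonneg_right _ (by linarith [hbj j])
        linarith [neg_abs_le (⟪u, v j⟫), habs j]
      nlinarith [(ha j).le]
    calc ‖u‖ ^ 2 = ∑ j, a j * (⟪u, v j⟫ * ⟪u, v j⟫) := hquad.symm
      _ ≤ ∑ j, (‖u‖ * (a j * (c - ⟪u, v j⟫)) + c * (a j * ⟪u, v j⟫)) :=
          Finset.sum_le_sum fun j _ => step j
      _ = ‖u‖ * (c * ∑ j, a j - ∑ j, a j * ⟪u, v j⟫) + c * ∑ j, a j * ⟪u, v j⟫ := by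
          rw [Finset.sum_add_distrib, ← Finset.mul_sum, ← Finset.mul_sum]
          congr 1
          congr 1
          rw [Finset.mul_sum, ← Finset.sum_sub_distrib]
          exact Finset.sum_congr rfl fun j _ => by ring
      _ = ‖u‖ * (c * n) := by rw [hzero, hsum]; ring
  have hune : u ≠ 0 := by
    intro h
    have h0 := hinner x
    rw [h, inner_zero_left] at h0
    linarith [hfx, hcpos, h0.symm ▸ (by linarith : (0:ℝ) < f x)]
  have hupos : 0 < ‖u‖ := norm_pos_iff.mpr hune
  have hub : ‖u‖ ≤ c * n := by
    rw [sq] at hkey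
    nlinarith
  have hxnorm : ‖x‖ ≤ 1 / n := by
    simpa [dist_eq_norm] using hx
  have hfxle : f x ≤ ‖u‖ * ‖x‖ := by
    rw [← hinner]
    exact real_inner_le_norm u x
  have hle : f x ≤ c := by
    calc f x ≤ ‖u‖ * ‖x‖ := hfxle
      _ ≤ (c * n) * (1 / n) := by
          apply mul_le_mul hub hxnorm (norm_nonneg x)
          positivity
      _ = c := by field_simp
  linarith
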